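/- arXiv:1712.07468 — 6 statements merged into one kernel-verified Lean document; each statement's English description precedes it below -/
import Mathlib

section
/- Let σ > 0, c_s ≥ 0 and α ∈ ℝ. Suppose (p, w, u) ∈ Q × W × V satisfies the homogeneous coupled system: (i) σ⟨c_s·p + α·D_V u, q⟩ + ⟨D_W w, q⟩ = 0 for all q ∈ Q; (ii) k(w, z) − ⟨p, D_W z⟩ = 0 for all z ∈ W; (iii) a(u, v) − α⟨p, D_V v⟩ = 0 for all v ∈ V. Then p = 0, w = 0 and u = 0. (Abstract form of Lemma 3.4 on uniqueness for the semidiscrete Biot system.) -/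
open RealInnerProductSpace

/-- Abstract form of Lemma 3.4 (uniqueness for the semidiscrete Biot system). -/
theorem biot_semidiscrete_uniqueness
    {Q W V : Type*}
    [NormedAddCommGroup Q] [InnerProductSpace ℝ Q] [FiniteDimensional ℝ Q]
    [NormedAddCommGroup W] [InnerProductSpace ℝ W] [FiniteDimensional ℝ W]
    [NormedAddCommGroup V] [InnerProductSpace ℝ V] [FiniteDimensional ℝ V]
    (DW : W →ₗ[ℝ] Q) (DV : V →ₗ[ℝ] Q)
    (hDW : Function.Surjective DW)
    (k : W →ₗ[ℝ] W →ₗ[ℝ] ℝ)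
    (hk_symm : ∀ z z' : W, k z z' = k z' z)
    (hk_pos : ∀ z : W, z ≠ 0 → 0 < k z z)
    (d : V →ₗ[ℝ] V →ₗ[ℝ] ℝ)
    (hd_symm : ∀ v v' : V, d v v' = d v' v)
    (κ : ℝ) (hκ : 0 < κ)
    (hd_coer : ∀ v : V, κ * ‖v‖ ^ 2 ≤ d v v)
    (μ lam : ℝ) (hμ : 0 < μ) (hlam : 0 < lam)
    (a : V → V → ℝ)
    (ha : ∀ u v : V, a u v = μ * d u v + lam * ⟪DV u, DV v⟫)
    (σ cs α : ℝ) (hσ : 0 < σ) (hcs : 0 ≤ cs)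
    (p : Q) (w : W) (u : V)
    (h1 : ∀ q : Q, σ * ⟪cs • p + α • DV u, q⟫ + ⟪DW w, q⟫ = 0)
    (h2 : ∀ z : W, k w z - ⟪p, DW z⟫ = 0)
    (h3 : ∀ v : V, a u v - α * ⟪p, DV v⟫ = 0) :
    p = 0 ∧ w = 0 ∧ u = 0 := by
  -- nonnegativity facts
  have hA : 0 ≤ k w w := by
    by_cases hw : w = 0
    · simp [hw]
    · exact (hk_pos w hw).le
  have hd0 : 0 ≤ d u u := le_trans (by positivity) (hd_coer u)
  have hDV : ⟪DV u, DV u⟫ = ‖DV u‖ ^ 2 := real_inner_self_eq_norm_sq _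
  have hB : 0 ≤ a u u := by
    rw [ha, hDV]; positivity
  -- the key identity
  have e1 := h1 p
  rw [inner_add_left, real_inner_smul_left, real_inner_smul_left] at e1
  have e2 := h2 w
  have e3 := h3 u
  have hcomm1 : ⟪DW w, p⟫ = ⟪p, DW w⟫ := real_inner_comm _ _
  have hcomm2 : ⟪DV u, p⟫ = ⟪p, DV u⟫ := real_inner_comm _ _
  have hpp : ⟪p, p⟫ = ‖p‖ ^ 2 := real_inner_self_eq_norm_sq _
  have hsum : σ * (cs * ‖p‖ ^ 2) + σ * (a u u) + k w w = 0 := by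
    rw [hcomm1, hcomm2, hpp] at e1
    linear_combination e1 + e2 + σ * e3
  have hC : 0 ≤ cs * ‖p‖ ^ 2 := by positivity
  have hσC : 0 ≤ σ * (cs * ‖p‖ ^ 2) := mul_nonneg hσ.le hC
  have hσB : 0 ≤ σ * (a u u) := mul_nonneg hσ.le hB
  have hk0 : k w w = 0 := by linarith
  have ha0 : a u u = 0 := by
    have hz : σ * (a u u) = 0 := by linarith
    exact (mul_eq_zero.mp hz).resolve_left (ne_of_gt hσ)
  have hw0 : w = 0 := by
    by_contra hw
    exact absurd hk0 (ne_of_gt (hk_pos w hw))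
  have hu0 : u = 0 := by
    have : μ * d u u + lam * ‖DV u‖ ^ 2 = 0 := by rw [← hDV, ← ha u u]; exact ha0
    have hs : 0 ≤ lam * ‖DV u‖ ^ 2 := mul_nonneg hlam.le (sq_nonneg _)
    have hμd : μ * d u u ≤ μ * 0 := by linarith
    have hd00 : d u u ≤ 0 := le_of_mul_le_mul_left hμd hμ
    have hcoer := hd_coer u
    have hκu : κ * ‖u‖ ^ 2 ≤ κ * 0 := by linarith
    have hsq : ‖u‖ ^ 2 ≤ 0 := le_of_mul_le_mul_left hκu hκ
    have hsq0 : ‖u‖ ^ 2 = 0 := le_antisymm hsq (sq_nonneg _)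
    have : ‖u‖ = 0 := by
      have := pow_eq_zero_iff (n := 2) (by norm_num) |>.mp hsq0
      exact this
    exact norm_eq_zero.mp this
  have hp0 : p = 0 := by
    have hall : ∀ q : Q, ⟪p, q⟫ = 0 := by
      intro q
      obtain ⟨z, rfl⟩ := hDW q
      have := h2 z
      rw [hw0] at this
      simpa using this.symm
    have := hall p
    rwa [inner_self_eq_zero] at this
  exact ⟨hp0, hw0, hu0⟩
end

section
/- Assume the inf-sup condition: there is β > 0 such that for every q ∈ Q there exists z ∈ W with D_W z = q and ‖z‖ ≤ ‖q‖/β. Assume k is bounded: k(z,z) ≤ M‖z‖² for all z ∈ W, for some M > 0. Let e_p ∈ Q and e_w ∈ W satisfy the error relation k(e_w, z) = ⟨e_p, D_W z⟩ for all z ∈ W. Then ‖e_p‖ ≤ (√M/β)·√(k(e_w, e_w)). (Abstract form of Lemma 4.3: the pressure error is controlled by the seepage-velocity error, with constant independent of h, μ, λ, α, c_s.) -/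
open RealInnerProductSpace

lemma bilin_cauchy_schwarz {W : Type*} [NormedAddCommGroup W] [InnerProductSpace ℝ W]
    (k : W →ₗ[ℝ] W →ₗ[ℝ] ℝ) (hk_symm : ∀ z z' : W, k z z' = k z' z)
    (hk_nonneg : ∀ z : W, 0 ≤ k z z) (x y : W) :
    (k x y) ^ 2 ≤ k x x * k y y := by
  have h : ∀ t : ℝ, 0 ≤ (k y y) * (t * t) + (2 * k x y) * t + k x x := by
    intro t
    have := hk_nonneg (x + t • y)
    simp only [map_add, map_smul, LinearMap.add_apply, LinearMap.smul_apply,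
      smul_eq_mul] at this
    rw [hk_symm y x] at this
    nlinarith
  have hd := discrim_le_zero h
  unfold discrim at hd
  nlinarith

/-- Abstract form of Lemma 4.3: the pressure error is controlled by the
seepage-velocity error via the inf-sup condition. -/
theorem biot_pressure_error_bound
    {Q W : Type*}
    [NormedAddCommGroup Q] [InnerProductSpace ℝ Q] [FiniteDimensional ℝ Q]
    [NormedAddCommGroup W] [InnerProductSpace ℝ W] [FiniteDimensional ℝ W]
    (DW : W →ₗ[ℝ] Q)
    (k : W →ₗ[ℝ] W →ₗ[ℝ] ℝ)
    (hk_symm : ∀ z z' : W, k z z' = k z' z)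
    (hk_nonneg : ∀ z : W, 0 ≤ k z z)
    (β M : ℝ) (hβ : 0 < β) (hM : 0 < M)
    (hinfsup : ∀ q : Q, ∃ z : W, DW z = q ∧ ‖z‖ ≤ ‖q‖ / β)
    (hk_bdd : ∀ z : W, k z z ≤ M * ‖z‖ ^ 2)
    (ep : Q) (ew : W)
    (herr : ∀ z : W, k ew z = ⟪ep, DW z⟫) :
    ‖ep‖ ≤ (Real.sqrt M / β) * Real.sqrt (k ew ew) := by
  obtain ⟨z, hz, hznorm⟩ := hinfsup ep
  have h1 : ‖ep‖ ^ 2 = k ew z := by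
    rw [herr z, hz, real_inner_self_eq_norm_sq]
  have hcs := bilin_cauchy_schwarz k hk_symm hk_nonneg ew z
  have hkz : k z z ≤ M * ‖z‖ ^ 2 := hk_bdd z
  -- k ew z ≤ √(k ew ew) * √(k z z)
  have h2 : k ew z ≤ Real.sqrt (k ew ew) * Real.sqrt (k z z) := by
    have := Real.sqrt_le_sqrt hcs
    rw [Real.sqrt_sq_eq_abs, Real.sqrt_mul (hk_nonneg ew)] at this
    exact le_trans (le_abs_self _) this
  have h3 : Real.sqrt (k z z) ≤ Real.sqrt M * ‖z‖ := by
    calc Real.sqrt (k z z) ≤ Real.sqrt (M * ‖z‖ ^ 2) := Real.sqrt_le_sqrt hkz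
    _ = Real.sqrt M * ‖z‖ := by
        rw [Real.sqrt_mul hM.le, Real.sqrt_sq (norm_nonneg z)]
  have hsM : 0 ≤ Real.sqrt M := Real.sqrt_nonneg M
  have hse : 0 ≤ Real.sqrt (k ew ew) := Real.sqrt_nonneg _
  have key : ‖ep‖ ^ 2 ≤ Real.sqrt (k ew ew) * (Real.sqrt M * (‖ep‖ / β)) := by
    rw [h1]
    calc k ew z ≤ Real.sqrt (k ew ew) * Real.sqrt (k z z) := h2
    _ ≤ Real.sqrt (k ew ew) * (Real.sqrt M * ‖z‖) := by
        exact mul_le_mul_of_nonneg_left h3 hse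
    _ ≤ Real.sqrt (k ew ew) * (Real.sqrt M * (‖ep‖ / β)) := by
        apply mul_le_mul_of_nonneg_left (mul_le_mul_of_nonneg_left hznorm hsM) hse
  rcases eq_or_lt_of_le (norm_nonneg ep) with h0 | h0
  · rw [← h0]; positivity
  · have : ‖ep‖ * ‖ep‖ ≤ (Real.sqrt M / β * Real.sqrt (k ew ew)) * ‖ep‖ := by
      calc ‖ep‖ * ‖ep‖ = ‖ep‖ ^ 2 := by ring
      _ ≤ Real.sqrt (k ew ew) * (Real.sqrt M * (‖ep‖ / β)) := key
      _ = (Real.sqrt M / β * Real.sqrt (k ew ew)) * ‖ep‖ := by ring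
    exact le_of_mul_le_mul_right this h0
end

section
/- Let Δt > 0, c_s ≥ 0 and α ∈ ℝ. For any linear functionals F : Q → ℝ, G : W → ℝ and H : V → ℝ, there exists exactly one triple (p, w, u) ∈ Q × W × V satisfying: (i) (1/Δt)⟨c_s·p + α·D_V u, q⟩ + ⟨D_W w, q⟩ = F(q) for all q ∈ Q; (ii) k(w, z) − ⟨p, D_W z⟩ = G(z) for all z ∈ W; (iii) a(u, v) − α⟨p, D_V v⟩ = H(v) for all v ∈ V. (Abstract form of Lemma 5.1: existence and uniqueness of each backward Euler time step of the discrete Biot system.) -/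
open RealInnerProductSpace

set_option maxHeartbeats 1000000 in
/-- Abstract form of Lemma 5.1: existence and uniqueness of each backward Euler
time step of the discrete Biot system. -/
theorem biot_backward_euler_step_exists_unique
    {Q W V : Type*}
    [NormedAddCommGroup Q] [InnerProductSpace ℝ Q] [FiniteDimensional ℝ Q]
    [NormedAddCommGroup W] [InnerProductSpace ℝ W] [FiniteDimensional ℝ W]
    [NormedAddCommGroup V] [InnerProductSpace ℝ V] [FiniteDimensional ℝ V]
    (DW : W →ₗ[ℝ] Q) (DV : V →ₗ[ℝ] Q)
    (hDW : Function.Surjective DW)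
    (k : W →ₗ[ℝ] W →ₗ[ℝ] ℝ)
    (hk_symm : ∀ z z' : W, k z z' = k z' z)
    (hk_pos : ∀ z : W, z ≠ 0 → 0 < k z z)
    (d : V →ₗ[ℝ] V →ₗ[ℝ] ℝ)
    (hd_symm : ∀ v v' : V, d v v' = d v' v)
    (κ : ℝ) (hκ : 0 < κ)
    (hd_coer : ∀ v : V, κ * ‖v‖ ^ 2 ≤ d v v)
    (μ lam : ℝ) (hμ : 0 < μ) (hlam : 0 < lam)
    (a : V → V → ℝ)
    (ha : ∀ u v : V, a u v = μ * d u v + lam * ⟪DV u, DV v⟫)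
    (Δt cs α : ℝ) (hΔt : 0 < Δt) (hcs : 0 ≤ cs)
    (F : Q →ₗ[ℝ] ℝ) (G : W →ₗ[ℝ] ℝ) (Hf : V →ₗ[ℝ] ℝ) :
    ∃! x : Q × W × V,
      (∀ q : Q, (Δt)⁻¹ * ⟪cs • x.1 + α • DV x.2.2, q⟫ + ⟪DW x.2.1, q⟫ = F q) ∧
      (∀ z : W, k x.2.1 z - ⟪x.1, DW z⟫ = G z) ∧
      (∀ v : V, a x.2.2 v - α * ⟪x.1, DV v⟫ = Hf v) := by
    -- The combined bilinear form on Q × W × V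

  have hbil : ∃ B : LinearMap.BilinForm ℝ (Q × W × V), ∀ x y : Q × W × V,
      B x y = Δt * ((Δt)⁻¹ * ⟪cs • x.1 + α • DV x.2.2, y.1⟫ + ⟪DW x.2.1, y.1⟫)
        + Δt * (k x.2.1 y.2.1 - ⟪x.1, DW y.2.1⟫)
        + Δt * (μ * d x.2.2 y.2.2 + lam * ⟪DV x.2.2, DV y.2.2⟫ - α * ⟪x.1, DV y.2.2⟫) := by
    refine ⟨LinearMap.mk₂ ℝ (fun x y =>
      Δt * ((Δt)⁻¹ * ⟪cs • x.1 + α • DV x.2.2, y.1⟫ + ⟪DW x.2.1, y.1⟫)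
        + Δt * (k x.2.1 y.2.1 - ⟪x.1, DW y.2.1⟫)
        + Δt * (μ * d x.2.2 y.2.2 + lam * ⟪DV x.2.2, DV y.2.2⟫ - α * ⟪x.1, DV y.2.2⟫))
      ?_ ?_ ?_ ?_, fun _ _ => rfl⟩
    · rintro ⟨p₁, w₁, u₁⟩ ⟨p₂, w₂, u₂⟩ ⟨q, z, v⟩
      simp only [Prod.fst_add, Prod.snd_add, Prod.mk_add_mk, map_add, LinearMap.add_apply, smul_add,
        inner_add_left, inner_add_right, real_inner_smul_left, real_inner_smul_right]
      ring
    · rintro c ⟨p, w, u⟩ ⟨q, z, v⟩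
      simp only [Prod.smul_fst, Prod.smul_snd, Prod.smul_mk, map_smul, LinearMap.smul_apply, smul_smul,
        smul_eq_mul, inner_add_left, inner_add_right, real_inner_smul_left,
        real_inner_smul_right, LinearMap.map_smul_of_tower]
      ring
    · rintro ⟨p, w, u⟩ ⟨q₁, z₁, v₁⟩ ⟨q₂, z₂, v₂⟩
      simp only [Prod.fst_add, Prod.snd_add, Prod.mk_add_mk, map_add, LinearMap.add_apply, smul_add,
        inner_add_left, inner_add_right, real_inner_smul_left, real_inner_smul_right]
      ring
    · rintro c ⟨p, w, u⟩ ⟨q, z, v⟩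
      simp only [Prod.smul_fst, Prod.smul_snd, Prod.smul_mk, map_smul, LinearMap.smul_apply, smul_smul,
        smul_eq_mul, inner_add_left, inner_add_right, real_inner_smul_left,
        real_inner_smul_right, LinearMap.map_smul_of_tower]
      ring
  obtain ⟨B, hB⟩ := hbil
  -- Key: a triple satisfies the three equations iff B x = ψ
  set ψ : Module.Dual ℝ (Q × W × V) :=
    F.comp (LinearMap.fst ℝ Q (W × V))
      + G.comp ((LinearMap.fst ℝ W V).comp (LinearMap.snd ℝ Q (W × V)))
      + Hf.comp ((LinearMap.snd ℝ W V).comp (LinearMap.snd ℝ Q (W × V))) with hψ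
  have hψ_apply : ∀ y : Q × W × V, ψ y = F y.1 + G y.2.1 + Hf y.2.2 := by
    intro y; simp [hψ]
  have key : ∀ x : Q × W × V,
      ((∀ q : Q, (Δt)⁻¹ * ⟪cs • x.1 + α • DV x.2.2, q⟫ + ⟪DW x.2.1, q⟫ = F q) ∧
       (∀ z : W, k x.2.1 z - ⟪x.1, DW z⟫ = G z) ∧
       (∀ v : V, a x.2.2 v - α * ⟪x.1, DV v⟫ = Hf v)) ↔ B x = Δt • ψ := by
    intro x
    constructor
    · rintro ⟨h1, h2, h3⟩
      refine LinearMap.ext fun y => ?_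
      have e3 := h3 y.2.2
      rw [ha] at e3
      rw [hB, LinearMap.smul_apply, hψ_apply, smul_eq_mul, ← h1 y.1, ← h2 y.2.1, ← e3]
      ring
    · intro h
      have hb : ∀ y : Q × W × V,
          Δt * ((Δt)⁻¹ * ⟪cs • x.1 + α • DV x.2.2, y.1⟫ + ⟪DW x.2.1, y.1⟫)
            + Δt * (k x.2.1 y.2.1 - ⟪x.1, DW y.2.1⟫)
            + Δt * (μ * d x.2.2 y.2.2 + lam * ⟪DV x.2.2, DV y.2.2⟫ - α * ⟪x.1, DV y.2.2⟫)
          = Δt * (F y.1 + G y.2.1 + Hf y.2.2) := by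
        intro y
        rw [← hB, h, LinearMap.smul_apply, hψ_apply, smul_eq_mul]
      refine ⟨fun q => ?_, fun z => ?_, fun v => ?_⟩
      · have := hb (q, 0, 0)
        simp only [map_zero, inner_zero_right, LinearMap.zero_apply, inner_zero_left,
          mul_zero, sub_zero, add_zero, zero_add] at this
        have := mul_left_cancel₀ (ne_of_gt hΔt) (by linarith : Δt *
          ((Δt)⁻¹ * ⟪cs • x.1 + α • DV x.2.2, q⟫ + ⟪DW x.2.1, q⟫) = Δt * F q)
        exact this
      · have := hb (0, z, 0)
        simp only [map_zero, inner_zero_right, LinearMap.zero_apply, inner_zero_left,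
          mul_zero, sub_zero, add_zero, zero_add, zero_sub, zero_mul] at this
        have := mul_left_cancel₀ (ne_of_gt hΔt) (by linarith : Δt *
          (k x.2.1 z - ⟪x.1, DW z⟫) = Δt * G z)
        exact this
      · have := hb (0, 0, v)
        simp only [map_zero, inner_zero_right, LinearMap.zero_apply, inner_zero_left,
          mul_zero, sub_zero, add_zero, zero_add, zero_sub, zero_mul] at this
        rw [ha]
        have := mul_left_cancel₀ (ne_of_gt hΔt) (by linarith : Δt *
          (μ * d x.2.2 v + lam * ⟪DV x.2.2, DV v⟫ - α * ⟪x.1, DV v⟫) = Δt * Hf v)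
        linarith
  -- Nondegeneracy via the energy estimate
  have hBnd : B.Nondegenerate := by
    suffices hL : B.SeparatingLeft by
      refine ⟨hL, fun y hy => ?_⟩
      have hinj : Function.Injective B :=
        LinearMap.ker_eq_bot.mp (LinearMap.separatingLeft_iff_ker_eq_bot.mp hL)
      have hsurj : Function.Surjective B :=
        (LinearMap.injective_iff_surjective_of_finrank_eq_finrank
          (Subspace.dual_finrank_eq).symm).mp hinj
      exact (Module.forall_dual_apply_eq_zero_iff ℝ y).mp fun f => by
        obtain ⟨x, rfl⟩ := hsurj f
        exact hy x
    intro x hx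
    obtain ⟨p, w, u⟩ := x
    have e1 : ∀ q : Q, (Δt)⁻¹ * ⟪cs • p + α • DV u, q⟫ + ⟪DW w, q⟫ = 0 := by
      intro q
      have := hx (q, 0, 0)
      rw [hB] at this
      simp only [map_zero, inner_zero_right, LinearMap.zero_apply, inner_zero_left,
        mul_zero, sub_zero, add_zero, zero_add] at this
      have hne : Δt ≠ 0 := ne_of_gt hΔt
      field_simp at this ⊢
      linarith
    have e2 : ∀ z : W, k w z - ⟪p, DW z⟫ = 0 := by
      intro z
      have := hx (0, z, 0)
      rw [hB] at this
      simp only [map_zero, inner_zero_right, LinearMap.zero_apply, inner_zero_left,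
        mul_zero, sub_zero, add_zero, zero_add, zero_sub, zero_mul] at this
      have hne : Δt ≠ 0 := ne_of_gt hΔt
      have : Δt * (k w z - ⟪p, DW z⟫) = 0 := by linarith
      exact (mul_eq_zero.mp this).resolve_left hne
    have e3 : ∀ v : V, μ * d u v + lam * ⟪DV u, DV v⟫ - α * ⟪p, DV v⟫ = 0 := by
      intro v
      have := hx (0, 0, v)
      rw [hB] at this
      simp only [map_zero, inner_zero_right, LinearMap.zero_apply, inner_zero_left,
        mul_zero, sub_zero, add_zero, zero_add, zero_sub, zero_mul] at this
      have : Δt * (μ * d u v + lam * ⟪DV u, DV v⟫ - α * ⟪p, DV v⟫) = 0 := by linarith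
      exact (mul_eq_zero.mp this).resolve_left (ne_of_gt hΔt)
    -- energy identity
    have h1 := e1 p
    have h2 := e2 w
    have h3 := e3 u
    rw [inner_add_left, real_inner_smul_left, real_inner_smul_left] at h1
    have hne : Δt ≠ 0 := ne_of_gt hΔt
    have h1' : cs * ⟪p, p⟫ + α * ⟪DV u, p⟫ + Δt * ⟪DW w, p⟫ = 0 := by
      field_simp at h1
      linarith
    have energy : cs * ⟪p, p⟫ + Δt * k w w + (μ * d u u + lam * ⟪DV u, DV u⟫) = 0 := by
      have hswap : ⟪DV u, p⟫ = ⟪p, DV u⟫ := real_inner_comm _ _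
      have hswap2 : ⟪DW w, p⟫ = ⟪p, DW w⟫ := real_inner_comm _ _
      linear_combination h1' + Δt * h2 + h3 - α * hswap - Δt * hswap2
    have hkww : 0 ≤ k w w := by
      rcases eq_or_ne w 0 with rfl | hw
      · simp
      · exact le_of_lt (hk_pos w hw)
    have hduu : 0 ≤ μ * d u u + lam * ⟪DV u, DV u⟫ := by
      have h1 : (0:ℝ) ≤ κ * ‖u‖ ^ 2 := by positivity
      have h2 : (0:ℝ) ≤ ⟪DV u, DV u⟫ := real_inner_self_nonneg
      nlinarith [hd_coer u]
    have hpp : (0:ℝ) ≤ cs * ⟪p, p⟫ := mul_nonneg hcs real_inner_self_nonneg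
    have hw0 : w = 0 := by
      by_contra hw
      have hkpos := mul_pos hΔt (hk_pos w hw)
      linarith [energy, hpp, hduu]
    have hu0 : u = 0 := by
      have hkw : 0 ≤ Δt * k w w := mul_nonneg hΔt.le hkww
      have hle : μ * d u u + lam * ⟪DV u, DV u⟫ ≤ 0 := by
        linarith [energy, hpp]
      have h2 : (0:ℝ) ≤ ⟪DV u, DV u⟫ := real_inner_self_nonneg
      have hdle : d u u ≤ 0 := by
        have hlam' : 0 ≤ lam * ⟪DV u, DV u⟫ := mul_nonneg hlam.le h2
        nlinarith [hle, hlam', hμ]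
      have hsq : ‖u‖ ^ 2 ≤ 0 := by nlinarith [hd_coer u, hκ]
      have hn0 : ‖u‖ = 0 := by nlinarith [norm_nonneg u, sq_nonneg ‖u‖]
      exact norm_eq_zero.mp hn0
    have hp0 : p = 0 := by
      have : ∀ q : Q, ⟪p, q⟫ = 0 := by
        intro q
        obtain ⟨z, rfl⟩ := hDW q
        have := e2 z
        rw [hw0] at this
        simpa using this.symm
      have := this p
      exact inner_self_eq_zero.mp this
    simp [hp0, hw0, hu0]
  -- conclude via the duality isomorphism
  obtain ⟨x₀, hBx₀⟩ : ∃ x₀, B x₀ = Δt • ψ :=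
    ⟨(B.toDual hBnd).symm (Δt • ψ),
      LinearMap.ext fun v => LinearMap.BilinForm.apply_toDual_symm_apply (hB := hBnd) (Δt • ψ) v⟩
  refine ⟨x₀, (key x₀).mpr hBx₀, fun y hy => ?_⟩
  have hBy := (key y).mp hy
  have h0 : y - x₀ = 0 := hBnd.1 _ fun n => by
    rw [map_sub, LinearMap.sub_apply, hBy, hBx₀, sub_self]
  exact sub_eq_zero.mp h0
end

section
/- Let c_s ≥ 0 and α ∈ ℝ. Let χ_p : ℝ → Q, χ_w : ℝ → W, χ_u : ℝ → V be differentiable curves, and let s : ℝ → Q, r : ℝ → W. Suppose that for every t: (i) c_s·χ_p′(t) + α·D_V(χ_u′(t)) + D_W(χ_w(t)) = α·s(t) in Q; (ii) k(χ_w(t), z) − ⟨χ_p(t), D_W z⟩ = k(r(t), z) for all z ∈ W; (iii) a(χ_u(t), v) − α⟨χ_p(t), D_V v⟩ = 0 for all v ∈ V. Then for every t the energy identity holds: (c_s/2)·(d/dt)‖χ_p(t)‖² + k(χ_w(t), χ_w(t)) + (μ/2)·(d/dt) d(χ_u(t), χ_u(t)) + (λ/2)·(d/dt)‖D_V χ_u(t)‖²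 = α⟨s(t), χ_p(t)⟩ + k(r(t), χ_w(t)). (Abstract form of the reduced error-energy identity derived from equations (4.9)–(4.11) in the proof of Theorem 4.5, after the projection orthogonalities eliminate all other coupling terms.) -/
open RealInnerProductSpace

/-- Abstract form of the reduced error-energy identity derived from
equations (4.9)–(4.11) in the proof of Theorem 4.5. -/
theorem biot_error_energy_identity
    {Q W V : Type*}
    [NormedAddCommGroup Q] [InnerProductSpace ℝ Q] [FiniteDimensional ℝ Q]
    [NormedAddCommGroup W] [InnerProductSpace ℝ W] [FiniteDimensional ℝ W]
    [NormedAddCommGroup V] [InnerProductSpace ℝ V] [FiniteDimensional ℝ V]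
    (DW : W →ₗ[ℝ] Q) (DV : V →ₗ[ℝ] Q)
    (k : W →ₗ[ℝ] W →ₗ[ℝ] ℝ)
    (hk_symm : ∀ z z' : W, k z z' = k z' z)
    (hk_nonneg : ∀ z : W, 0 ≤ k z z)
    (d : V →ₗ[ℝ] V →ₗ[ℝ] ℝ)
    (hd_symm : ∀ v v' : V, d v v' = d v' v)
    (μ lam : ℝ) (hμ : 0 < μ) (hlam : 0 < lam)
    (a : V → V → ℝ)
    (ha : ∀ u v : V, a u v = μ * d u v + lam * ⟪DV u, DV v⟫)
    (cs α : ℝ) (hcs : 0 ≤ cs)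
    (χp : ℝ → Q) (χw : ℝ → W) (χu : ℝ → V) (s : ℝ → Q) (r : ℝ → W)
    (χp' : ℝ → Q) (χu' : ℝ → V)
    (hχp : ∀ t : ℝ, HasDerivAt χp (χp' t) t)
    (hχu : ∀ t : ℝ, HasDerivAt χu (χu' t) t)
    (h1 : ∀ t : ℝ, cs • χp' t + α • DV (χu' t) + DW (χw t) = α • s t)
    (h2 : ∀ t : ℝ, ∀ z : W, k (χw t) z - ⟪χp t, DW z⟫ = k (r t) z)
    (h3 : ∀ t : ℝ, ∀ v : V, a (χu t) v - α * ⟪χp t, DV v⟫ = 0) :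
    ∀ t : ℝ,
      (cs / 2) * deriv (fun τ => ‖χp τ‖ ^ 2) t
        + k (χw t) (χw t)
        + (μ / 2) * deriv (fun τ => d (χu τ) (χu τ)) t
        + (lam / 2) * deriv (fun τ => ‖DV (χu τ)‖ ^ 2) t
      = α * ⟪s t, χp t⟫ + k (r t) (χw t) := by

  intro t
  -- continuous versions of the linear/bilinear maps
  let DVc : V →L[ℝ] Q := DV.toContinuousLinearMap
  let d1 : V →ₗ[ℝ] (V →L[ℝ] ℝ) :=
    { toFun := fun x => (d x).toContinuousLinearMap
      map_add' := by intro x y; ext v; simp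
      map_smul' := by intro c x; ext v; simp }
  let dc : V →L[ℝ] V →L[ℝ] ℝ := d1.toContinuousLinearMap
  have hdc : ∀ x y : V, dc x y = d x y := fun x y => rfl
  -- derivative of ‖χp‖²
  have hp2 : HasDerivAt (fun τ => ‖χp τ‖ ^ 2)
      (⟪χp t, χp' t⟫ + ⟪χp' t, χp t⟫) t := by
    have h := (hχp t).inner ℝ (hχp t)
    have heq : (fun τ => ‖χp τ‖ ^ 2) = fun τ => ⟪χp τ, χp τ⟫ := by
      funext τ; rw [real_inner_self_eq_norm_sq]
    rw [heq]; exact h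
  -- derivative of τ ↦ DV (χu τ)
  have hDVu : HasDerivAt (fun τ => DVc (χu τ)) (DVc (χu' t)) t := by
    exact (DVc.hasFDerivAt.comp_hasDerivAt t (hχu t))
  have hq2 : HasDerivAt (fun τ => ‖DV (χu τ)‖ ^ 2)
      (⟪DV (χu t), DV (χu' t)⟫ + ⟪DV (χu' t), DV (χu t)⟫) t := by
    have h := hDVu.inner ℝ hDVu
    have heq : (fun τ => ‖DV (χu τ)‖ ^ 2) = fun τ => ⟪DVc (χu τ), DVc (χu τ)⟫ := by
      funext τ; rw [real_inner_self_eq_norm_sq]; rfl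
    rw [heq]; exact h
  -- derivative of τ ↦ d (χu τ) (χu τ)
  have hc : HasDerivAt (fun τ => dc (χu τ)) (dc (χu' t)) t := by
    exact (dc.hasFDerivAt.comp_hasDerivAt t (hχu t))
  have hd2 : HasDerivAt (fun τ => d (χu τ) (χu τ))
      (d (χu' t) (χu t) + d (χu t) (χu' t)) t := by
    have h := hc.clm_apply (hχu t)
    simpa [hdc] using h
  rw [hp2.deriv, hq2.deriv, hd2.deriv]
  -- the three tested equations
  have E1 : cs * ⟪χp' t, χp t⟫ + α * ⟪DV (χu' t), χp t⟫ + ⟪DW (χw t), χp t⟫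
      = α * ⟪s t, χp t⟫ := by
    have := congrArg (fun x => ⟪x, χp t⟫) (h1 t)
    simpa [inner_add_left, real_inner_smul_left] using this
  have E2 : k (χw t) (χw t) - ⟪χp t, DW (χw t)⟫ = k (r t) (χw t) := h2 t (χw t)
  have E3 : μ * d (χu t) (χu' t) + lam * ⟪DV (χu t), DV (χu' t)⟫
      - α * ⟪χp t, DV (χu' t)⟫ = 0 := by
    have := h3 t (χu' t)
    rwa [ha] at this
  have s1 : ⟪χp' t, χp t⟫ = ⟪χp t, χp' t⟫ := real_inner_comm _ _
  have s2 : ⟪DV (χu' t), DV (χu t)⟫ = ⟪DV (χu t), DV (χu' t)⟫ := real_inner_comm _ _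
  have s3 : ⟪DV (χu' t), χp t⟫ = ⟪χp t, DV (χu' t)⟫ := real_inner_comm _ _
  have s4 : ⟪DW (χw t), χp t⟫ = ⟪χp t, DW (χw t)⟫ := real_inner_comm _ _
  have s5 : d (χu' t) (χu t) = d (χu t) (χu' t) := hd_symm _ _
  rw [s1, s3, s4] at E1
  rw [s1, s2, s5]
  linarith
end

section
/- Let c_s ≥ 0 and α ∈ ℝ. Let χ_p : ℝ → Q, χ_w : ℝ → W, χ_u : ℝ → V be continuously differentiable curves with χ_p(0) = 0 and χ_u(0) = 0, and let s : ℝ → Q, r : ℝ → W be continuous. Assume: (i) c_s·χ_p′(t) + α·D_V(χ_u′(t)) + D_W(χ_w(t)) = α·s(t) for all t; (ii) k(χ_w(t), z) − ⟨χ_p(t), D_W z⟩ = k(r(t), z) for all z ∈ W and all t; (iii) a(χ_u(t), v) − α⟨χ_p(t), D_V v⟩ = 0 for all v ∈ V and all t. Assume moreover the inf-sup condition (there is β > 0 such that every q ∈ Q has a preimage z under D_W with ‖z‖ ≤ ‖q‖/β) and the boundedness k(z,z) ≤ M‖z‖² for all z ∈ W. Then there is a constant C > 0, depending only on β and M (in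 particular independent of c_s, α, μ, λ, κ and t), such that for all t ≥ 0: c_s‖χ_p(t)‖² + ∫₀ᵗ k(χ_w(τ), χ_w(τ)) dτ + κμ‖χ_u(t)‖² + λ‖D_V χ_u(t)‖² ≤ C ∫₀ᵗ ( α²‖s(τ)‖² + k(r(τ), r(τ)) ) dτ. (Abstract form of the integrated error bound which is the core of Theorem 4.5.) -/
open RealInnerProductSpace

/-- Cauchy–Schwarz (squared form) for a symmetric positive-semidefinite
bilinear form. -/
lemma psd_cauchy_sq {W : Type*} [AddCommGroup W] [Module ℝ W]
    (k : W →ₗ[ℝ] W →ₗ[ℝ] ℝ) (hsymm : ∀ x y : W, k x y = k y x)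
    (hpos : ∀ x : W, 0 ≤ k x x) (x y : W) : (k x y) ^ 2 ≤ k x x * k y y := by
  have hexp : ∀ c : ℝ, k (x + c • y) (x + c • y)
      = k x x + 2 * c * k x y + c ^ 2 * k y y := by
    intro c
    simp only [map_add, map_smul, LinearMap.add_apply, LinearMap.smul_apply, smul_eq_mul]
    rw [hsymm y x]; ring
  rcases eq_or_lt_of_le (hpos y) with h | h
  · have hxy : k x y = 0 := by
      by_contra hne
      set c : ℝ := -(k x x + 1) / (2 * k x y) with hc
      have h1 := hpos (x + c • y)
      rw [hexp, ← h] at h1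
      have h2 : 2 * c * k x y = -(k x x + 1) := by
        rw [hc]; field_simp
      nlinarith
    rw [hxy]
    nlinarith [hpos x, hpos y]
  · set c : ℝ := -(k x y) / (k y y) with hc
    have h1 := hpos (x + c • y)
    rw [hexp] at h1
    have hy : k y y ≠ 0 := ne_of_gt h
    have h2 : 2 * c * k x y + c ^ 2 * k y y = -((k x y) ^ 2) / k y y := by
      rw [hc]; field_simp; ring
    rw [add_assoc, h2] at h1
    have h4 : (-(k x y ^ 2) / k y y) * k y y = -(k x y ^ 2) := by field_simp
    nlinarith [mul_nonneg h1 h.le, h4]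

/-- Cauchy–Schwarz for a symmetric positive-semidefinite bilinear form. -/
lemma psd_cauchy {W : Type*} [AddCommGroup W] [Module ℝ W]
    (k : W →ₗ[ℝ] W →ₗ[ℝ] ℝ) (hsymm : ∀ x y : W, k x y = k y x)
    (hpos : ∀ x : W, 0 ≤ k x x) (x y : W) :
    k x y ≤ Real.sqrt (k x x) * Real.sqrt (k y y) := by
  have h := psd_cauchy_sq k hsymm hpos x y
  calc k x y ≤ Real.sqrt ((k x y) ^ 2) := by
        rw [Real.sqrt_sq_eq_abs]; exact le_abs_self _
  _ ≤ Real.sqrt (k x x * k y y) := Real.sqrt_le_sqrt h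
  _ = Real.sqrt (k x x) * Real.sqrt (k y y) := Real.sqrt_mul (hpos x) _

set_option maxHeartbeats 1000000 in
/-- Abstract form of the integrated error bound which is the core of Theorem 4.5.
The constant `C` depends only on the inf-sup constant `β` and the continuity
constant `M` of the form `k`. -/
theorem biot_integrated_error_bound (β M : ℝ) (hβ : 0 < β) (hM : 0 < M) :
    ∃ C > 0,
      ∀ (Q W V : Type)
        [NormedAddCommGroup Q] [InnerProductSpace ℝ Q] [FiniteDimensional ℝ Q]
        [NormedAddCommGroup W] [InnerProductSpace ℝ W] [FiniteDimensional ℝ W]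
        [NormedAddCommGroup V] [InnerProductSpace ℝ V] [FiniteDimensional ℝ V]
        (DW : W →ₗ[ℝ] Q) (DV : V →ₗ[ℝ] Q)
        (k : W →ₗ[ℝ] W →ₗ[ℝ] ℝ)
        (_hk_symm : ∀ z z' : W, k z z' = k z' z)
        (_hk_nonneg : ∀ z : W, 0 ≤ k z z)
        (d : V →ₗ[ℝ] V →ₗ[ℝ] ℝ)
        (_hd_symm : ∀ v v' : V, d v v' = d v' v)
        (κ : ℝ) (_hκ : 0 < κ)
        (_hd_coer : ∀ v : V, κ * ‖v‖ ^ 2 ≤ d v v)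
        (μ lam : ℝ) (_hμ : 0 < μ) (_hlam : 0 < lam)
        (a : V → V → ℝ)
        (_ha : ∀ u v : V, a u v = μ * d u v + lam * ⟪DV u, DV v⟫)
        (cs α : ℝ) (_hcs : 0 ≤ cs)
        (χp : ℝ → Q) (χw : ℝ → W) (χu : ℝ → V) (s : ℝ → Q) (r : ℝ → W)
        (_hχpC1 : ContDiff ℝ 1 χp) (_hχwC1 : ContDiff ℝ 1 χw) (_hχuC1 : ContDiff ℝ 1 χu)
        (_hs : Continuous s) (_hr : Continuous r)
        (_hχp0 : χp 0 = 0) (_hχu0 : χu 0 = 0)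
        (_h1 : ∀ t : ℝ, cs • deriv χp t + α • DV (deriv χu t) + DW (χw t) = α • s t)
        (_h2 : ∀ t : ℝ, ∀ z : W, k (χw t) z - ⟪χp t, DW z⟫ = k (r t) z)
        (_h3 : ∀ t : ℝ, ∀ v : V, a (χu t) v - α * ⟪χp t, DV v⟫ = 0)
        (_hinfsup : ∀ q : Q, ∃ z : W, DW z = q ∧ ‖z‖ ≤ ‖q‖ / β)
        (_hk_bdd : ∀ z : W, k z z ≤ M * ‖z‖ ^ 2)
        (t : ℝ), 0 ≤ t →
        cs * ‖χp t‖ ^ 2 + (∫ τ in (0 : ℝ)..t, k (χw τ) (χw τ))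
            + κ * μ * ‖χu t‖ ^ 2 + lam * ‖DV (χu t)‖ ^ 2
          ≤ C * ∫ τ in (0 : ℝ)..t, (α ^ 2 * ‖s τ‖ ^ 2 + k (r τ) (r τ)) := by
  have hc2 : 0 < M / β ^ 2 := by positivity
  refine ⟨8 * M / β ^ 2 + 4, by positivity, ?_⟩
  intro Q W V _ _ _ _ _ _ _ _ _ DW DV k hk_symm hk_nonneg d hd_symm κ hκ hd_coer μ lam hμ
    hlam a ha cs α hcs χp χw χu s r hχpC1 hχwC1 hχuC1 hs hr hχp0 hχu0 h1 h2 h3 hinfsup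
    hk_bdd t ht
  set c2 : ℝ := M / β ^ 2 with hc2def
  clear_value c2
  -- continuous versions of the bilinear forms and of DV
  obtain ⟨kC, hkC⟩ : ∃ kC : W →L[ℝ] W →L[ℝ] ℝ, ∀ x y : W, kC x y = k x y :=
    ⟨LinearMap.toContinuousLinearMap
      ((LinearMap.toContinuousLinearMap :
        (W →ₗ[ℝ] ℝ) ≃ₗ[ℝ] (W →L[ℝ] ℝ)).toLinearMap.comp k), by intro x y; simp⟩
  obtain ⟨dC, hdC⟩ : ∃ dC : V →L[ℝ] V →L[ℝ] ℝ, ∀ x y : V, dC x y = d x y :=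
    ⟨LinearMap.toContinuousLinearMap
      ((LinearMap.toContinuousLinearMap :
        (V →ₗ[ℝ] ℝ) ≃ₗ[ℝ] (V →L[ℝ] ℝ)).toLinearMap.comp d), by intro x y; simp⟩
  obtain ⟨DVc, hDVc⟩ : ∃ DVc : V →L[ℝ] Q, ∀ x : V, DVc x = DV x :=
    ⟨LinearMap.toContinuousLinearMap DV, by intro x; simp⟩
  -- basic continuity facts
  have hχpc : Continuous χp := hχpC1.continuous
  have hχwc : Continuous χw := hχwC1.continuous
  have hχuc : Continuous χu := hχuC1.continuous
  have hχp'c : Continuous (deriv χp) := hχpC1.continuous_deriv le_rfl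
  have hχu'c : Continuous (deriv χu) := hχuC1.continuous_deriv le_rfl
  have hχpd : ∀ τ : ℝ, HasDerivAt χp (deriv χp τ) τ := fun τ =>
    ((hχpC1.differentiable one_ne_zero) τ).hasDerivAt
  have hχud : ∀ τ : ℝ, HasDerivAt χu (deriv χu τ) τ := fun τ =>
    ((hχuC1.differentiable one_ne_zero) τ).hasDerivAt
  -- the energy and its derivative
  set E : ℝ → ℝ := fun τ => cs / 2 * ⟪χp τ, χp τ⟫ + μ / 2 * dC (χu τ) (χu τ)
      + lam / 2 * ⟪DVc (χu τ), DVc (χu τ)⟫ with hEdef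
  set E' : ℝ → ℝ := fun τ => cs * ⟪deriv χp τ, χp τ⟫ + μ * dC (deriv χu τ) (χu τ)
      + lam * ⟪DVc (deriv χu τ), DVc (χu τ)⟫ with hE'def
  have hE : ∀ τ : ℝ, HasDerivAt E (E' τ) τ := by
    intro τ
    have t1 : HasDerivAt (fun τ => ⟪χp τ, χp τ⟫)
        (⟪χp τ, deriv χp τ⟫ + ⟪deriv χp τ, χp τ⟫) τ := (hχpd τ).inner ℝ (hχpd τ)
    have t2a : HasDerivAt (fun τ => dC (χu τ)) (dC (deriv χu τ)) τ :=
      dC.hasFDerivAt.comp_hasDerivAt τ (hχud τ)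
    have t2 : HasDerivAt (fun τ => dC (χu τ) (χu τ))
        (dC (deriv χu τ) (χu τ) + dC (χu τ) (deriv χu τ)) τ := t2a.clm_apply (hχud τ)
    have t3a : HasDerivAt (fun τ => DVc (χu τ)) (DVc (deriv χu τ)) τ :=
      DVc.hasFDerivAt.comp_hasDerivAt τ (hχud τ)
    have t3 : HasDerivAt (fun τ => ⟪DVc (χu τ), DVc (χu τ)⟫)
        (⟪DVc (χu τ), DVc (deriv χu τ)⟫ + ⟪DVc (deriv χu τ), DVc (χu τ)⟫) τ :=
      t3a.inner ℝ t3a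
    have := ((t1.const_mul (cs / 2)).add (t2.const_mul (μ / 2))).add
      (t3.const_mul (lam / 2))
    have hsd : dC (χu τ) (deriv χu τ) = dC (deriv χu τ) (χu τ) := by
      rw [hdC, hdC, hd_symm]
    refine this.congr_deriv (Eq.symm ?_)
    simp only [hE'def]
    linear_combination (cs/2) * real_inner_comm (χp τ) (deriv χp τ)
      - (μ/2) * hsd
      + (lam/2) * real_inner_comm (DVc (χu τ)) (DVc (deriv χu τ))
  have hE'c : Continuous E' := by
    refine ((continuous_const.mul (Continuous.inner hχp'c hχpc)).add
      (continuous_const.mul ?_)).add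
      (continuous_const.mul (Continuous.inner (DVc.continuous.comp hχu'c)
        (DVc.continuous.comp hχuc)))
    exact dC.continuous₂.comp (hχu'c.prodMk hχuc)
  have hkwwc : Continuous fun τ => k (χw τ) (χw τ) := by
    have : (fun τ => k (χw τ) (χw τ)) = fun τ => kC (χw τ) (χw τ) := by
      funext τ; rw [hkC]
    rw [this]
    exact kC.continuous₂.comp (hχwc.prodMk hχwc)
  have hkrrc : Continuous fun τ => k (r τ) (r τ) := by
    have : (fun τ => k (r τ) (r τ)) = fun τ => kC (r τ) (r τ) := by
      funext τ; rw [hkC]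
    rw [this]
    exact kC.continuous₂.comp (hr.prodMk hr)
  have hgc : Continuous fun τ => α ^ 2 * ‖s τ‖ ^ 2 + k (r τ) (r τ) :=
    (continuous_const.mul ((hs.norm).pow 2)).add hkrrc
  -- E(0) = 0
  have hE0 : E 0 = 0 := by
    simp [hEdef, hχp0, hχu0]
  -- FTC
  have hFTC : (∫ τ in (0:ℝ)..t, E' τ) = E t - E 0 :=
    intervalIntegral.integral_eq_sub_of_hasDerivAt (fun τ _ => hE τ)
      (hE'c.intervalIntegrable 0 t)
  -- pointwise bound on ‖χp‖²
  have hp2 : ∀ τ : ℝ, ‖χp τ‖ ^ 2 ≤ 2 * c2 * (k (χw τ) (χw τ) + k (r τ) (r τ)) := by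
    intro τ
    obtain ⟨z, hz1, hz2⟩ := hinfsup (χp τ)
    set e : W := χw τ - r τ with hedef
    have hkee : 0 ≤ k e e := hk_nonneg e
    have he5 : k e e ≤ 2 * (k (χw τ) (χw τ) + k (r τ) (r τ)) := by
      have h0 := hk_nonneg (χw τ + r τ)
      simp only [hedef, map_add, map_sub, LinearMap.add_apply, LinearMap.sub_apply] at h0 ⊢
      linarith [hk_symm (χw τ) (r τ)]
    have e1 : ‖χp τ‖ ^ 2 = k e z := by
      have h2z := h2 τ z
      rw [← hz1] at h2z
      rw [← real_inner_self_eq_norm_sq, ← hz1]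
      simp only [hedef, map_sub, LinearMap.sub_apply]
      linarith
    have e2 : k e z ≤ Real.sqrt (k e e) * Real.sqrt (k z z) :=
      psd_cauchy k hk_symm hk_nonneg e z
    have e3 : Real.sqrt (k z z) ≤ Real.sqrt M * ‖z‖ := by
      have : Real.sqrt (k z z) ≤ Real.sqrt (M * ‖z‖ ^ 2) :=
        Real.sqrt_le_sqrt (hk_bdd z)
      rwa [Real.sqrt_mul hM.le, Real.sqrt_sq (norm_nonneg z)] at this
    have hP : ‖χp τ‖ ^ 2 ≤ Real.sqrt (k e e) * Real.sqrt M * (‖χp τ‖ / β) := by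
      calc ‖χp τ‖ ^ 2 = k e z := e1
      _ ≤ Real.sqrt (k e e) * Real.sqrt (k z z) := e2
      _ ≤ Real.sqrt (k e e) * (Real.sqrt M * ‖z‖) :=
          mul_le_mul_of_nonneg_left e3 (Real.sqrt_nonneg _)
      _ ≤ Real.sqrt (k e e) * (Real.sqrt M * (‖χp τ‖ / β)) :=
          mul_le_mul_of_nonneg_left
            (mul_le_mul_of_nonneg_left hz2 (Real.sqrt_nonneg M)) (Real.sqrt_nonneg _)
      _ = Real.sqrt (k e e) * Real.sqrt M * (‖χp τ‖ / β) := by ring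
    rcases eq_or_lt_of_le (norm_nonneg (χp τ)) with hP0 | hP0
    · have h0 : ‖χp τ‖ ^ 2 = 0 := by rw [← hP0]; norm_num
      rw [h0]
      exact mul_nonneg (by positivity)
        (add_nonneg (hk_nonneg _) (hk_nonneg _))
    · set S : ℝ := Real.sqrt (k e e * M) with hSdef
      have hSr : Real.sqrt (k e e) * Real.sqrt M = S := (Real.sqrt_mul hkee M).symm
      have hS2 : S ^ 2 = k e e * M := Real.sq_sqrt (by positivity)
      have hPle : ‖χp τ‖ ≤ S / β := by
        have h' : ‖χp τ‖ * ‖χp τ‖ ≤ (S / β) * ‖χp τ‖ := by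
          rw [← hSr]
          calc ‖χp τ‖ * ‖χp τ‖ = ‖χp τ‖ ^ 2 := by ring
          _ ≤ Real.sqrt (k e e) * Real.sqrt M * (‖χp τ‖ / β) := hP
          _ = Real.sqrt (k e e) * Real.sqrt M / β * ‖χp τ‖ := by ring
        exact le_of_mul_le_mul_right h' hP0
      calc ‖χp τ‖ ^ 2 ≤ (S / β) ^ 2 := pow_le_pow_left₀ (norm_nonneg _) hPle 2
      _ = k e e * M / β ^ 2 := by rw [div_pow, hS2]
      _ = c2 * k e e := by rw [hc2def]; ring
      _ ≤ c2 * (2 * (k (χw τ) (χw τ) + k (r τ) (r τ))) :=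
          mul_le_mul_of_nonneg_left he5 hc2.le
      _ = 2 * c2 * (k (χw τ) (χw τ) + k (r τ) (r τ)) := by ring
  -- pointwise differential inequality
  have hptw : ∀ τ ∈ Set.Icc (0:ℝ) t, E' τ + (1/4) * k (χw τ) (χw τ)
      ≤ (2 * c2 + 1) * (α ^ 2 * ‖s τ‖ ^ 2 + k (r τ) (r τ)) := by
    intro τ _
    -- identity for E'
    have eq3 : μ * d (χu τ) (deriv χu τ) + lam * ⟪DV (χu τ), DV (deriv χu τ)⟫
        = α * ⟪χp τ, DV (deriv χu τ)⟫ := by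
      have := h3 τ (deriv χu τ)
      rw [ha] at this
      linarith
    have eq1 : cs * ⟪deriv χp τ, χp τ⟫ + α * ⟪DV (deriv χu τ), χp τ⟫
        + ⟪DW (χw τ), χp τ⟫ = α * ⟪s τ, χp τ⟫ := by
      have h := congrArg (fun q : Q => ⟪q, χp τ⟫) (h1 τ)
      simpa [inner_add_left, real_inner_smul_left] using h
    have eq2 : ⟪χp τ, DW (χw τ)⟫ = k (χw τ) (χw τ) - k (r τ) (χw τ) := by
      have := h2 τ (χw τ); linarith
    have hEid : E' τ = α * ⟪s τ, χp τ⟫ - k (χw τ) (χw τ) + k (r τ) (χw τ) := by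
      rw [hE'def]
      simp only [hdC, hDVc]
      have hcomm1 : ⟪DV (deriv χu τ), DV (χu τ)⟫ = ⟪DV (χu τ), DV (deriv χu τ)⟫ :=
        real_inner_comm _ _
      have hcomm2 : ⟪DV (deriv χu τ), χp τ⟫ = ⟪χp τ, DV (deriv χu τ)⟫ :=
        real_inner_comm _ _
      have hcomm3 : ⟪DW (χw τ), χp τ⟫ = ⟪χp τ, DW (χw τ)⟫ := real_inner_comm _ _
      have hds : d (deriv χu τ) (χu τ) = d (χu τ) (deriv χu τ) := hd_symm _ _
      rw [hds, hcomm1]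
      rw [hcomm3, eq2] at eq1
      rw [hcomm2] at eq1
      linarith
    -- bound k(r, χw)
    have hkrw : k (r τ) (χw τ) ≤ (k (r τ) (r τ) + k (χw τ) (χw τ)) / 2 := by
      have h0 := hk_nonneg (r τ - χw τ)
      simp only [map_sub, LinearMap.sub_apply] at h0
      linarith [hk_symm (r τ) (χw τ)]
    -- bound α⟪s,χp⟫
    have hsp : α * ⟪s τ, χp τ⟫ ≤ |α| * ‖s τ‖ * ‖χp τ‖ := by
      calc α * ⟪s τ, χp τ⟫ ≤ |α * ⟪s τ, χp τ⟫| := le_abs_self _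
      _ = |α| * |⟪s τ, χp τ⟫| := abs_mul _ _
      _ ≤ |α| * (‖s τ‖ * ‖χp τ‖) :=
          mul_le_mul_of_nonneg_left (abs_real_inner_le_norm (s τ) (χp τ)) (abs_nonneg α)
      _ = |α| * ‖s τ‖ * ‖χp τ‖ := by ring
    have hX2 : (|α| * ‖s τ‖) ^ 2 = α ^ 2 * ‖s τ‖ ^ 2 := by
      rw [mul_pow, sq_abs]
    have hXP : |α| * ‖s τ‖ * ‖χp τ‖ ≤ 2 * c2 * (α ^ 2 * ‖s τ‖ ^ 2)
        + (k (χw τ) (χw τ) + k (r τ) (r τ)) / 4 := by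
      nlinarith [sq_nonneg (4 * c2 * (|α| * ‖s τ‖) - ‖χp τ‖), hp2 τ, hc2,
        mul_pos hc2 hc2]
    have hkww := hk_nonneg (χw τ)
    have hkrr := hk_nonneg (r τ)
    have hss : 0 ≤ α ^ 2 * ‖s τ‖ ^ 2 := by positivity
    rw [hEid]
    linarith [hkrw, hsp, hXP, mul_nonneg hc2.le hkrr, hss]
  -- integrate the pointwise inequality
  have hint1 : IntervalIntegrable (fun τ => E' τ + (1/4) * k (χw τ) (χw τ))
      MeasureTheory.volume 0 t :=
    (hE'c.add (continuous_const.mul hkwwc)).intervalIntegrable 0 t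
  have hint2 : IntervalIntegrable
      (fun τ => (2 * c2 + 1) * (α ^ 2 * ‖s τ‖ ^ 2 + k (r τ) (r τ)))
      MeasureTheory.volume 0 t :=
    (continuous_const.mul hgc).intervalIntegrable 0 t
  have hIineq := intervalIntegral.integral_mono_on ht hint1 hint2 hptw
  rw [intervalIntegral.integral_add (hE'c.intervalIntegrable 0 t)
      ((continuous_const.mul hkwwc).intervalIntegrable 0 t)
      (g := fun τ => (1/4 : ℝ) * k (χw τ) (χw τ)),
    intervalIntegral.integral_const_mul, intervalIntegral.integral_const_mul,
    hFTC, hE0, sub_zero] at hIineq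
  -- assemble
  clear_value E E'
  set A : ℝ := ∫ τ in (0:ℝ)..t, k (χw τ) (χw τ) with hAdef
  set G : ℝ := ∫ τ in (0:ℝ)..t, (α ^ 2 * ‖s τ‖ ^ 2 + k (r τ) (r τ)) with hGdef
  have hAnn : 0 ≤ A :=
    intervalIntegral.integral_nonneg ht (fun τ _ => hk_nonneg (χw τ))
  have hEt : E t = cs / 2 * ‖χp t‖ ^ 2 + μ / 2 * d (χu t) (χu t)
      + lam / 2 * ‖DV (χu t)‖ ^ 2 := by
    rw [hEdef]
    simp only [hdC, hDVc]
    rw [real_inner_self_eq_norm_sq, real_inner_self_eq_norm_sq]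
  have hdlb : κ * ‖χu t‖ ^ 2 ≤ d (χu t) (χu t) := hd_coer (χu t)
  have hElb : cs / 2 * ‖χp t‖ ^ 2 + μ / 2 * (κ * ‖χu t‖ ^ 2)
      + lam / 2 * ‖DV (χu t)‖ ^ 2 ≤ E t := by
    rw [hEt]
    have := mul_le_mul_of_nonneg_left hdlb (by positivity : (0:ℝ) ≤ μ / 2)
    linarith
  have hnn1 : 0 ≤ cs * ‖χp t‖ ^ 2 := by positivity
  have hnn2 : 0 ≤ κ * μ * ‖χu t‖ ^ 2 := by positivity
  have hnn3 : 0 ≤ lam * ‖DV (χu t)‖ ^ 2 := by positivity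
  have hC : 8 * M / β ^ 2 + 4 = 4 * (2 * c2 + 1) := by rw [hc2def]; ring
  rw [hC]
  -- goal : cs*P² + A + κμ U² + lam Q² ≤ 4*(2c2+1)*G
  nlinarith [hIineq, hElb, hAnn, hnn1, hnn2, hnn3, hc2]
end

section
/- Let Δt > 0, c_s ≥ 0 and α ∈ ℝ. Let (χ_pⁿ)ₙ in Q, (χ_wⁿ)ₙ in W, (χ_uⁿ)ₙ in V, (sⁿ)ₙ in Q, (rⁿ)ₙ in W and (ρⁿ)ₙ in Q be sequences with χ_p⁰ = 0 and χ_u⁰ = 0 satisfying for every n ≥ 0: (i) (1/Δt)(c_s(χ_pⁿ⁺¹ − χ_pⁿ) + α·D_V(χ_uⁿ⁺¹ − χ_uⁿ)) + D_W χ_wⁿ⁺¹ = (α/Δt)·sⁿ⁺¹ + Δt·ρⁿ⁺¹ in Q; (ii) k(χ_wⁿ⁺¹, z) − ⟨χ_pⁿ⁺¹, D_W z⟩ = k(rⁿ⁺¹, z) for all z ∈ W; (iii) a(χ_uⁿ⁺¹, v) − α⟨χ_pⁿ⁺¹, D_V v⟩ = 0 for all v ∈ V. Assume the inf-sup condition (there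 is β > 0 such that every q ∈ Q has a preimage z under D_W with ‖z‖ ≤ ‖q‖/β) and the boundedness k(z,z) ≤ M‖z‖² for all z ∈ W. Then there is a constant C > 0, depending only on β and M (in particular independent of Δt, c_s, α, μ, λ, κ and m), such that for every m ≥ 1: c_s‖χ_pᵐ‖² + Δt·Σ_{n=0}^{m−1} k(χ_wⁿ⁺¹, χ_wⁿ⁺¹) + κμ‖χ_uᵐ‖² + λ‖D_V χ_uᵐ‖² ≤ C·( (α²/Δt)·Σ_{n=0}^{m−1} ‖sⁿ⁺¹‖² + Δt·Σ_{n=0}^{m−1} k(rⁿ⁺¹, rⁿ⁺¹) + Δt³·Σ_{n=0}^{m−1} ‖ρⁿ⁺¹‖² ). (Abstract form of the telescoped discrete error bound which is the core of Theorem 5.2.) -/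
open RealInnerProductSpace

private lemma bilin_cs {W : Type*} [AddCommGroup W] [Module ℝ W]
    (k : W →ₗ[ℝ] W →ₗ[ℝ] ℝ) (hsymm : ∀ x y, k x y = k y x)
    (hpos : ∀ x, 0 ≤ k x x) (x y : W) :
    (k x y) ^ 2 ≤ k x x * k y y := by
  have key : ∀ t : ℝ, 0 ≤ k y y * (t * t) + (2 * k x y) * t + k x x := by
    intro t
    have h := hpos (x + t • y)
    have hexp : k (x + t • y) (x + t • y)
        = k y y * (t * t) + (2 * k x y) * t + k x x := by
      simp only [map_add, map_smul, LinearMap.add_apply, LinearMap.smul_apply,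
        smul_eq_mul]
      linear_combination t * hsymm y x
    linarith [hexp ▸ h]
  have hd := discrim_le_zero key
  simp only [discrim] at hd
  nlinarith

private lemma bilin_young {W : Type*} [AddCommGroup W] [Module ℝ W]
    (k : W →ₗ[ℝ] W →ₗ[ℝ] ℝ) (hsymm : ∀ x y, k x y = k y x)
    (hpos : ∀ x, 0 ≤ k x x) (x y : W) {δ : ℝ} (hδ : 0 < δ) :
    k x y ≤ (δ * k x x + δ⁻¹ * k y y) / 2 := by
  have h1 := bilin_cs k hsymm hpos x y
  have h2 := hpos x
  have h3 := hpos y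
  have hδ' : δ * δ⁻¹ = 1 := mul_inv_cancel₀ hδ.ne'
  have hB : 0 ≤ (δ * k x x + δ⁻¹ * k y y) / 2 := by positivity
  have hsq : (k x y) ^ 2 ≤ ((δ * k x x + δ⁻¹ * k y y) / 2) ^ 2 := by
    nlinarith [sq_nonneg (δ * k x x - δ⁻¹ * k y y)]
  calc k x y ≤ |k x y| := le_abs_self _
    _ = Real.sqrt ((k x y) ^ 2) := (Real.sqrt_sq_eq_abs _).symm
    _ ≤ Real.sqrt (((δ * k x x + δ⁻¹ * k y y) / 2) ^ 2) := Real.sqrt_le_sqrt hsq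
    _ = (δ * k x x + δ⁻¹ * k y y) / 2 := Real.sqrt_sq hB

private lemma young_inner {Q : Type*} [NormedAddCommGroup Q] [InnerProductSpace ℝ Q]
    (x y : Q) (α c T : ℝ) (hc : 0 < c) (hT : 0 < T) :
    α * ⟪x, y⟫ ≤ c * (α ^ 2 / T) * ‖x‖ ^ 2 + (4 * c)⁻¹ * T * ‖y‖ ^ 2 := by
  have h1 : α * ⟪x, y⟫ ≤ |α| * (‖x‖ * ‖y‖) := by
    calc α * ⟪x, y⟫ ≤ |α * ⟪x, y⟫| := le_abs_self _
      _ = |α| * |⟪x, y⟫| := abs_mul _ _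
      _ ≤ |α| * (‖x‖ * ‖y‖) :=
          mul_le_mul_of_nonneg_left (abs_real_inner_le_norm _ _) (abs_nonneg α)
  have hTne : T ≠ 0 := hT.ne'
  have hcne : c ≠ 0 := hc.ne'
  have h2 : |α| * (‖x‖ * ‖y‖) * (4 * c * T)
      ≤ (c * (α ^ 2 / T) * ‖x‖ ^ 2 + (4 * c)⁻¹ * T * ‖y‖ ^ 2) * (4 * c * T) := by
    have e : (c * (α ^ 2 / T) * ‖x‖ ^ 2 + (4 * c)⁻¹ * T * ‖y‖ ^ 2) * (4 * c * T)
        = 4 * c ^ 2 * α ^ 2 * ‖x‖ ^ 2 + T ^ 2 * ‖y‖ ^ 2 := by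
      field_simp
    rw [e]
    rcases abs_cases α with ⟨ha1, _⟩ | ⟨ha1, _⟩ <;> rw [ha1] <;>
      nlinarith [sq_nonneg (2 * c * α * ‖x‖ - T * ‖y‖),
        sq_nonneg (2 * c * α * ‖x‖ + T * ‖y‖), norm_nonneg x, norm_nonneg y, hc, hT]
  have h3 := le_of_mul_le_mul_right h2 (by positivity : (0:ℝ) < 4 * c * T)
  linarith

set_option maxHeartbeats 1000000 in
/-- Abstract form of the telescoped discrete error bound which is the core of
Theorem 5.2.  The constant `C` depends only on the inf-sup constant `β` and the
continuity constant `M` of the form `k`. -/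
theorem biot_discrete_error_bound (β M : ℝ) (hβ : 0 < β) (hM : 0 < M) :
    ∃ C > 0,
      ∀ (Q W V : Type)
        [NormedAddCommGroup Q] [InnerProductSpace ℝ Q] [FiniteDimensional ℝ Q]
        [NormedAddCommGroup W] [InnerProductSpace ℝ W] [FiniteDimensional ℝ W]
        [NormedAddCommGroup V] [InnerProductSpace ℝ V] [FiniteDimensional ℝ V]
        (DW : W →ₗ[ℝ] Q) (DV : V →ₗ[ℝ] Q)
        (k : W →ₗ[ℝ] W →ₗ[ℝ] ℝ)
        (_hk_symm : ∀ z z' : W, k z z' = k z' z)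
        (_hk_nonneg : ∀ z : W, 0 ≤ k z z)
        (d : V →ₗ[ℝ] V →ₗ[ℝ] ℝ)
        (_hd_symm : ∀ v v' : V, d v v' = d v' v)
        (κ : ℝ) (_hκ : 0 < κ)
        (_hd_coer : ∀ v : V, κ * ‖v‖ ^ 2 ≤ d v v)
        (μ lam : ℝ) (_hμ : 0 < μ) (_hlam : 0 < lam)
        (a : V → V → ℝ)
        (_ha : ∀ u v : V, a u v = μ * d u v + lam * ⟪DV u, DV v⟫)
        (Δt cs α : ℝ) (_hΔt : 0 < Δt) (_hcs : 0 ≤ cs)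
        (χp s ρ : ℕ → Q) (χw r : ℕ → W) (χu : ℕ → V)
        (_hχp0 : χp 0 = 0) (_hχu0 : χu 0 = 0)
        (_h1 : ∀ n : ℕ,
          (Δt)⁻¹ • (cs • (χp (n + 1) - χp n) + α • DV (χu (n + 1) - χu n))
              + DW (χw (n + 1))
            = (α / Δt) • s (n + 1) + Δt • ρ (n + 1))
        (_h2 : ∀ n : ℕ, ∀ z : W, k (χw (n + 1)) z - ⟪χp (n + 1), DW z⟫ = k (r (n + 1)) z)
        (_h3 : ∀ n : ℕ, ∀ v : V, a (χu (n + 1)) v - α * ⟪χp (n + 1), DV v⟫ = 0)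
        (_hinfsup : ∀ q : Q, ∃ z : W, DW z = q ∧ ‖z‖ ≤ ‖q‖ / β)
        (_hk_bdd : ∀ z : W, k z z ≤ M * ‖z‖ ^ 2)
        (m : ℕ), 1 ≤ m →
        cs * ‖χp m‖ ^ 2
            + Δt * ∑ n ∈ Finset.range m, k (χw (n + 1)) (χw (n + 1))
            + κ * μ * ‖χu m‖ ^ 2 + lam * ‖DV (χu m)‖ ^ 2
          ≤ C * ((α ^ 2 / Δt) * ∑ n ∈ Finset.range m, ‖s (n + 1)‖ ^ 2
              + Δt * ∑ n ∈ Finset.range m, k (r (n + 1)) (r (n + 1))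
              + Δt ^ 3 * ∑ n ∈ Finset.range m, ‖ρ (n + 1)‖ ^ 2) := by
  have hβ2 : (0:ℝ) < β ^ 2 := pow_pos hβ 2
  have hC1 : (0:ℝ) < 4 * M / β ^ 2 := by positivity
  have hC8 : (0:ℝ) < 8 * M / β ^ 2 := by positivity
  refine ⟨5 / 2 + 8 * M / β ^ 2, by linarith, ?_⟩
  intro Q W V _ _ _ _ _ _ _ _ _ DW DV k hk_symm hk_nonneg d hd_symm κ hκ hd_coer
    μ lam hμ hlam a ha Δt cs α hΔt hcs χp s ρ χw r χu hχp0 hχu0 h1 h2 h3 hinfsup hk_bdd m _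
  have hΔne : Δt ≠ 0 := hΔt.ne'
  -- nonnegativity of a on the diagonal, and lower bound
  have haLB : ∀ v : V, κ * μ * ‖v‖ ^ 2 + lam * ‖DV v‖ ^ 2 ≤ a v v := by
    intro v
    rw [ha, real_inner_self_eq_norm_sq]
    nlinarith [mul_le_mul_of_nonneg_left (hd_coer v) hμ.le]
  have haNN : ∀ v : V, 0 ≤ a v v := by
    intro v
    refine le_trans ?_ (haLB v)
    positivity
  -- symmetric-form identity for a
  have ha_key : ∀ x y : V, 2 * a x (x - y) = a x x - a y y + a (x - y) (x - y) := by
    intro x y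
    simp only [ha, map_sub, LinearMap.sub_apply, inner_sub_left, inner_sub_right]
    linear_combination (-μ) * hd_symm x y + lam * real_inner_comm (DV x) (DV y)
  -- pressure bound from inf-sup
  have hp_bound : ∀ n : ℕ, ‖χp (n + 1)‖ ^ 2
      ≤ 2 * M / β ^ 2 * (k (χw (n + 1)) (χw (n + 1)) + k (r (n + 1)) (r (n + 1))) := by
    intro n
    obtain ⟨z, hz1, hz2⟩ := hinfsup (χp (n + 1))
    set p' := χp (n + 1)
    set w' := χw (n + 1)
    set r' := r (n + 1)
    have heq : ‖p'‖ ^ 2 = k (w' - r') z := by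
      have h := h2 n z
      rw [hz1, real_inner_self_eq_norm_sq] at h
      simp only [map_sub, LinearMap.sub_apply]
      linarith
    have hcs2 := bilin_cs k hk_symm hk_nonneg (w' - r') z
    have hkW : k (w' - r') (w' - r') ≤ 2 * (k w' w' + k r' r') := by
      have hy1 := bilin_young k hk_symm hk_nonneg w' r' (δ := 1) one_pos
      have hy2 := bilin_young k hk_symm hk_nonneg w' (-r') (δ := 1) one_pos
      have hneg : k w' (-r') = -(k w' r') := by simp
      have hnn : k (-r') (-r') = k r' r' := by simp
      rw [hneg] at hy2
      rw [hnn] at hy2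
      have hexp : k (w' - r') (w' - r') = k w' w' - k w' r' - k r' w' + k r' r' := by
        simp only [map_sub, LinearMap.sub_apply]; ring
      rw [hexp]
      have := hk_symm r' w'
      simp only [inv_one, one_mul] at hy1 hy2
      linarith
    have hz2' : ‖z‖ * β ≤ ‖p'‖ := (le_div_iff₀ hβ).mp hz2
    have hzsq : β ^ 2 * ‖z‖ ^ 2 ≤ ‖p'‖ ^ 2 := by
      nlinarith [norm_nonneg z, mul_nonneg (norm_nonneg z) hβ.le]
    have h3' : β ^ 2 * k z z ≤ M * ‖p'‖ ^ 2 := by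
      have := hk_bdd z
      nlinarith
    have hq0 : (0:ℝ) ≤ ‖p'‖ ^ 2 := sq_nonneg _
    have hS0 : (0:ℝ) ≤ 2 * (k w' w' + k r' r') := by
      have := hk_nonneg w'; have := hk_nonneg r'; linarith
    have h4 : ‖p'‖ ^ 2 * ‖p'‖ ^ 2 ≤ k (w' - r') (w' - r') * k z z := by
      calc ‖p'‖ ^ 2 * ‖p'‖ ^ 2 = (k (w' - r') z) ^ 2 := by rw [heq]; ring
        _ ≤ _ := hcs2
    have h5 : k (w' - r') (w' - r') * k z z ≤ 2 * (k w' w' + k r' r') * k z z :=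
      mul_le_mul_of_nonneg_right hkW (hk_nonneg z)
    have h6 : β ^ 2 * (‖p'‖ ^ 2 * ‖p'‖ ^ 2)
        ≤ 2 * (k w' w' + k r' r') * (M * ‖p'‖ ^ 2) := by
      calc β ^ 2 * (‖p'‖ ^ 2 * ‖p'‖ ^ 2)
          ≤ β ^ 2 * (2 * (k w' w' + k r' r') * k z z) :=
            mul_le_mul_of_nonneg_left (h4.trans h5) hβ2.le
        _ = 2 * (k w' w' + k r' r') * (β ^ 2 * k z z) := by ring
        _ ≤ 2 * (k w' w' + k r' r') * (M * ‖p'‖ ^ 2) :=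
            mul_le_mul_of_nonneg_left h3' hS0
    rcases eq_or_lt_of_le hq0 with h | h
    · rw [← h]
      exact mul_nonneg (by positivity) (by linarith [hk_nonneg w', hk_nonneg r'])
    · have h8 : β ^ 2 * ‖p'‖ ^ 2 * ‖p'‖ ^ 2
          ≤ 2 * M * (k w' w' + k r' r') * ‖p'‖ ^ 2 := by linarith [h6]
      have h7 : β ^ 2 * ‖p'‖ ^ 2 ≤ 2 * M * (k w' w' + k r' r') :=
        le_of_mul_le_mul_right h8 h
      rw [div_mul_eq_mul_div, le_div_iff₀ hβ2]
      linarith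
  -- the per-step energy inequality
  set F : ℕ → ℝ := fun n => cs / 2 * ‖χp n‖ ^ 2 + a (χu n) (χu n) / 2 with hF
  set G : ℕ → ℝ := fun n => Δt * k (r (n + 1)) (r (n + 1))
      + α ^ 2 / Δt * ‖s (n + 1)‖ ^ 2 + Δt ^ 3 * ‖ρ (n + 1)‖ ^ 2 with hG
  have hβne : β ≠ 0 := hβ.ne'
  have hMne : M ≠ 0 := hM.ne'
  have hstep : ∀ n : ℕ, F (n + 1) - F n + Δt / 2 * k (χw (n + 1)) (χw (n + 1))
      ≤ (5 / 4 + 4 * M / β ^ 2) * G n := by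
    intro n
    simp only [hF, hG]
    -- the tested equation (i)
    have e1 : cs * ⟪χp (n + 1) - χp n, χp (n + 1)⟫
        + α * ⟪DV (χu (n + 1) - χu n), χp (n + 1)⟫
        + Δt * ⟪DW (χw (n + 1)), χp (n + 1)⟫
        = α * ⟪s (n + 1), χp (n + 1)⟫ + Δt ^ 2 * ⟪ρ (n + 1), χp (n + 1)⟫ := by
      have h := congrArg (fun q : Q => ⟪q, χp (n + 1)⟫) (h1 n)
      simp only [inner_add_left, real_inner_smul_left] at h
      field_simp at h
      simp only [map_sub] at h ⊢
      linarith
    have e2 := h2 n (χw (n + 1))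
    have e3 := h3 n (χu (n + 1) - χu n)
    -- the energy identity
    have star : cs * ⟪χp (n + 1) - χp n, χp (n + 1)⟫
        + a (χu (n + 1)) (χu (n + 1) - χu n)
        + Δt * k (χw (n + 1)) (χw (n + 1))
        = Δt * k (r (n + 1)) (χw (n + 1)) + α * ⟪s (n + 1), χp (n + 1)⟫
          + Δt ^ 2 * ⟪ρ (n + 1), χp (n + 1)⟫ := by
      linear_combination e1 + e3 + Δt * e2
        - α * real_inner_comm (χp (n + 1)) (DV (χu (n + 1) - χu n))
        - Δt * real_inner_comm (χp (n + 1)) (DW (χw (n + 1)))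
    -- lower bounds on the left-hand side
    have hpp : (‖χp (n + 1)‖ ^ 2 - ‖χp n‖ ^ 2) / 2 ≤ ⟪χp (n + 1) - χp n, χp (n + 1)⟫ := by
      have hns := norm_sub_sq_real (χp (n + 1)) (χp n)
      have hil : ⟪χp (n + 1) - χp n, χp (n + 1)⟫
          = ‖χp (n + 1)‖ ^ 2 - ⟪χp n, χp (n + 1)⟫ := by
        rw [inner_sub_left, real_inner_self_eq_norm_sq]
      have hcomm := real_inner_comm (χp n) (χp (n + 1))
      linarith [hns, hil, hcomm, sq_nonneg ‖χp (n + 1) - χp n‖]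
    have hcspp := mul_le_mul_of_nonneg_left hpp hcs
    have hAA : (a (χu (n + 1)) (χu (n + 1)) - a (χu n) (χu n)) / 2
        ≤ a (χu (n + 1)) (χu (n + 1) - χu n) := by
      have h := ha_key (χu (n + 1)) (χu n)
      have h' := haNN (χu (n + 1) - χu n)
      linarith
    -- upper bounds on the right-hand side
    have hy1 : k (r (n + 1)) (χw (n + 1))
        ≤ k (r (n + 1)) (r (n + 1)) + k (χw (n + 1)) (χw (n + 1)) / 4 := by
      have h := bilin_young k hk_symm hk_nonneg (r (n + 1)) (χw (n + 1))
        (δ := 2) (by norm_num)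
      linarith
    have hy1' := mul_le_mul_of_nonneg_left hy1 hΔt.le
    have hy2 : α * ⟪s (n + 1), χp (n + 1)⟫
        ≤ 4 * M / β ^ 2 * (α ^ 2 / Δt) * ‖s (n + 1)‖ ^ 2
          + β ^ 2 / (16 * M) * Δt * ‖χp (n + 1)‖ ^ 2 := by
      have h := young_inner (s (n + 1)) (χp (n + 1)) α (4 * M / β ^ 2) Δt
        (by positivity) hΔt
      have e : (4 * (4 * M / β ^ 2))⁻¹ = β ^ 2 / (16 * M) := by
        rw [show 4 * (4 * M / β ^ 2) = 16 * M / β ^ 2 by ring, inv_div]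
      rw [e] at h
      exact h
    have hy3 : Δt ^ 2 * ⟪ρ (n + 1), χp (n + 1)⟫
        ≤ 4 * M / β ^ 2 * Δt ^ 3 * ‖ρ (n + 1)‖ ^ 2
          + β ^ 2 / (16 * M) * Δt * ‖χp (n + 1)‖ ^ 2 := by
      have h := young_inner (ρ (n + 1)) (χp (n + 1)) (Δt ^ 2) (4 * M / β ^ 2) Δt
        (by positivity) hΔt
      have e : (4 * (4 * M / β ^ 2))⁻¹ = β ^ 2 / (16 * M) := by
        rw [show 4 * (4 * M / β ^ 2) = 16 * M / β ^ 2 by ring, inv_div]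
      rw [e] at h
      have e2' : 4 * M / β ^ 2 * ((Δt ^ 2) ^ 2 / Δt) = 4 * M / β ^ 2 * Δt ^ 3 := by
        field_simp
      calc Δt ^ 2 * ⟪ρ (n + 1), χp (n + 1)⟫
          ≤ 4 * M / β ^ 2 * ((Δt ^ 2) ^ 2 / Δt) * ‖ρ (n + 1)‖ ^ 2
            + β ^ 2 / (16 * M) * Δt * ‖χp (n + 1)‖ ^ 2 := h
        _ = 4 * M / β ^ 2 * Δt ^ 3 * ‖ρ (n + 1)‖ ^ 2
            + β ^ 2 / (16 * M) * Δt * ‖χp (n + 1)‖ ^ 2 := by rw [e2']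
    -- absorb the pressure terms using the inf-sup bound
    have hPBaux := mul_le_mul_of_nonneg_left (hp_bound n)
      (by positivity : (0:ℝ) ≤ β ^ 2 / (16 * M) * Δt)
    have heq2 : β ^ 2 / (16 * M) * Δt
        * (2 * M / β ^ 2 * (k (χw (n + 1)) (χw (n + 1)) + k (r (n + 1)) (r (n + 1))))
        = Δt / 8 * (k (χw (n + 1)) (χw (n + 1)) + k (r (n + 1)) (r (n + 1))) := by
      field_simp
      ring
    have hPB : β ^ 2 / (16 * M) * Δt * ‖χp (n + 1)‖ ^ 2
          + β ^ 2 / (16 * M) * Δt * ‖χp (n + 1)‖ ^ 2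
        ≤ Δt / 4 * (k (χw (n + 1)) (χw (n + 1)) + k (r (n + 1)) (r (n + 1))) := by
      rw [heq2] at hPBaux
      linarith
    -- expand the right-hand side and collect terms
    have hexpand : (5 / 4 + 4 * M / β ^ 2)
        * (Δt * k (r (n + 1)) (r (n + 1)) + α ^ 2 / Δt * ‖s (n + 1)‖ ^ 2
            + Δt ^ 3 * ‖ρ (n + 1)‖ ^ 2)
        = 5 / 4 * (Δt * k (r (n + 1)) (r (n + 1)))
          + 5 / 4 * (α ^ 2 / Δt * ‖s (n + 1)‖ ^ 2)
          + 5 / 4 * (Δt ^ 3 * ‖ρ (n + 1)‖ ^ 2)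
          + 4 * M / β ^ 2 * (Δt * k (r (n + 1)) (r (n + 1)))
          + 4 * M / β ^ 2 * (α ^ 2 / Δt) * ‖s (n + 1)‖ ^ 2
          + 4 * M / β ^ 2 * Δt ^ 3 * ‖ρ (n + 1)‖ ^ 2 := by ring
    have hn1 : (0:ℝ) ≤ 4 * M / β ^ 2 * (Δt * k (r (n + 1)) (r (n + 1))) :=
      mul_nonneg hC1.le (mul_nonneg hΔt.le (hk_nonneg _))
    have hn2 : (0:ℝ) ≤ α ^ 2 / Δt * ‖s (n + 1)‖ ^ 2 := by positivity
    have hn3 : (0:ℝ) ≤ Δt ^ 3 * ‖ρ (n + 1)‖ ^ 2 := by positivity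
    linarith [star, hcspp, hAA, hy1', hy2, hy3, hPB, hexpand, hn1, hn2, hn3]
  -- telescoping
  have hF0 : F 0 = 0 := by
    have ha00 : a 0 0 = 0 := by rw [ha]; simp
    simp [hF, hχp0, hχu0, ha00]
  have tele := Finset.sum_range_sub F m
  have hsum1 : F m - F 0 + Δt / 2 * ∑ n ∈ Finset.range m, k (χw (n + 1)) (χw (n + 1))
      ≤ (5 / 4 + 4 * M / β ^ 2) * ∑ n ∈ Finset.range m, G n := by
    calc F m - F 0 + Δt / 2 * ∑ n ∈ Finset.range m, k (χw (n + 1)) (χw (n + 1))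
        = ∑ n ∈ Finset.range m,
            (F (n + 1) - F n + Δt / 2 * k (χw (n + 1)) (χw (n + 1))) := by
          rw [Finset.sum_add_distrib, tele, ← Finset.mul_sum]
      _ ≤ ∑ n ∈ Finset.range m, (5 / 4 + 4 * M / β ^ 2) * G n :=
          Finset.sum_le_sum fun n _ => hstep n
      _ = (5 / 4 + 4 * M / β ^ 2) * ∑ n ∈ Finset.range m, G n := by
          rw [← Finset.mul_sum]
  have hGsum : ∑ n ∈ Finset.range m, G n
      = Δt * ∑ n ∈ Finset.range m, k (r (n + 1)) (r (n + 1))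
        + α ^ 2 / Δt * ∑ n ∈ Finset.range m, ‖s (n + 1)‖ ^ 2
        + Δt ^ 3 * ∑ n ∈ Finset.range m, ‖ρ (n + 1)‖ ^ 2 := by
    simp only [hG, Finset.sum_add_distrib, Finset.mul_sum]
  have hAm := haLB (χu m)
  have hFm : F m = cs / 2 * ‖χp m‖ ^ 2 + a (χu m) (χu m) / 2 := by simp only [hF]
  have hEq : (5 / 2 + 8 * M / β ^ 2)
      * (α ^ 2 / Δt * ∑ n ∈ Finset.range m, ‖s (n + 1)‖ ^ 2
        + Δt * ∑ n ∈ Finset.range m, k (r (n + 1)) (r (n + 1))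
        + Δt ^ 3 * ∑ n ∈ Finset.range m, ‖ρ (n + 1)‖ ^ 2)
      = 2 * ((5 / 4 + 4 * M / β ^ 2) * ∑ n ∈ Finset.range m, G n) := by
    rw [hGsum]; ring
  rw [hEq]
  have t1 : cs * ‖χp m‖ ^ 2 + Δt * ∑ n ∈ Finset.range m, k (χw (n + 1)) (χw (n + 1))
        + κ * μ * ‖χu m‖ ^ 2 + lam * ‖DV (χu m)‖ ^ 2
      ≤ 2 * (F m - F 0) + Δt * ∑ n ∈ Finset.range m, k (χw (n + 1)) (χw (n + 1)) := by
    rw [hFm, hF0]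
    linarith [hAm]
  have t2 : 2 * (F m - F 0) + Δt * ∑ n ∈ Finset.range m, k (χw (n + 1)) (χw (n + 1))
      ≤ 2 * ((5 / 4 + 4 * M / β ^ 2) * ∑ n ∈ Finset.range m, G n) := by
    linarith [hsum1]
  exact t1.trans t2
end
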